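/- For every odd integer n > 3, let H_n be the bipartite cubic graph with vertex classes A = {a_0, …, a_{n−1}} and B = {b_0, …, b_{n−1}} whose edge set is the union of the three perfect matchings M_0, M_1, M_2, where M_j = {a_i b_{i+j} : 0 ≤ i ≤ n−1} with indices computed modulo n. Then m(H_n) = 4; moreover, the four subgraphs consisting of the edgeless spanning subgraph together with the three unions M_i ∪ M_j (0 ≤ i < j ≤ 2) form a connectivity code for H_n, since each union of two of the matchings M_i is a Hamilton cycle of H_n. -/

import Mathlib

open SimpleGraph

/-- A collection `𝒢` of spanning subgraphs of `H` is a *connectivity code* for `H` if the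
symmetric difference of any two distinct members of `𝒢` is a connected (spanning) subgraph
of `H`. -/
def IsConnCode {V : Type*} (H : SimpleGraph V) (𝒢 : Set (SimpleGraph V)) : Prop :=
  (∀ G ∈ 𝒢, G ≤ H) ∧
    ∀ G₁ ∈ 𝒢, ∀ G₂ ∈ 𝒢, G₁ ≠ G₂ → (symmDiff G₁ G₂).Connected

/-- `mCode H` is the maximum possible cardinality of a connectivity code for `H`. -/
noncomputable def mCode {V : Type*} [Fintype V] (H : SimpleGraph V) : ℕ :=
  sSup {n : ℕ | ∃ 𝒢 : Set (SimpleGraph V), IsConnCode H 𝒢 ∧ 𝒢.ncard = n}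

/-- The set of edges of `H` with one endpoint in `W` and the other in its complement. -/
def cutEdgeSet {V : Type*} (H : SimpleGraph V) (W : Set V) : Set (Sym2 V) :=
  {e | e ∈ H.edgeSet ∧ ∃ x ∈ W, ∃ y ∈ Wᶜ, e = s(x, y)}

/-- The edge-connectivity of `H`: the minimum number of edges whose deletion disconnects `H`. -/
noncomputable def edgeConn {V : Type*} [Fintype V] (H : SimpleGraph V) : ℕ :=
  sInf {n : ℕ | ∃ F : Set (Sym2 V), F ⊆ H.edgeSet ∧ F.ncard = n ∧
    ¬(H.deleteEdges F).Connected}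

/-- The perfect matching `M_j` on the vertex set `A ∪ B`, `A = {a_0, …, a_{n-1}}`
(coded `(false, i)`), `B = {b_0, …, b_{n-1}}` (coded `(true, i)`), consisting of the edges
`a_i b_{i+j}` with indices mod `n`. -/
def bipMatching (n j : ℕ) : SimpleGraph (Bool × Fin n) :=
  SimpleGraph.fromRel (fun p q =>
    p.1 = false ∧ q.1 = true ∧ (q.2 : ℕ) = ((p.2 : ℕ) + j) % n)

/-- The cubic bipartite graph `H_n`: the union of the three matchings `M_0, M_1, M_2`. -/
def cubicBip (n : ℕ) : SimpleGraph (Bool × Fin n) :=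
  bipMatching n 0 ⊔ bipMatching n 1 ⊔ bipMatching n 2

lemma mod_solve {n i k m : ℕ} (hi : i < n) (hk : k < n) (hm : m < n) :
    (m + i) % n = k ↔ m = (k + (n - i)) % n := by
  constructor
  · intro h
    have : (k + (n - i)) % n = m := by
      rw [← h, Nat.mod_add_mod]
      have : m + i + (n - i) = m + n := by omega
      rw [this, Nat.add_mod_right, Nat.mod_eq_of_lt hm]
    omega
  · rintro rfl
    rw [Nat.mod_add_mod]
    have : k + (n - i) + i = k + n := by omega
    rw [this, Nat.add_mod_right, Nat.mod_eq_of_lt hk]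

lemma add_mod_inj {n s t : ℕ} (hs : s < n) (ht : t < n) (k : ℕ)
    (h : (k + s) % n = (k + t) % n) : s = t := by
  have : s % n = t % n := Nat.ModEq.add_left_cancel' k h
  rwa [Nat.mod_eq_of_lt hs, Nat.mod_eq_of_lt ht] at this

lemma sub_mod_inj {n s t : ℕ} (hs : s < n) (ht : t < n) (k : Fin n)
    (h : ((k : ℕ) + (n - s)) % n = ((k : ℕ) + (n - t)) % n) : s = t := by
  have hn : 0 < n := lt_of_le_of_lt (Nat.zero_le s) hs
  have h1 : ((((k : ℕ) + (n - s)) % n) + s) % n = (k : ℕ) :=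
    (mod_solve hs k.isLt (Nat.mod_lt _ hn)).2 rfl
  have h2 : ((((k : ℕ) + (n - t)) % n) + t) % n = (k : ℕ) :=
    (mod_solve ht k.isLt (Nat.mod_lt _ hn)).2 rfl
  rw [← h] at h2
  exact add_mod_inj hs ht _ (h1.trans h2.symm)

lemma bipMatching_adj {n j : ℕ} (p q : Bool × Fin n) :
    (bipMatching n j).Adj p q ↔
      (p.1 = false ∧ q.1 = true ∧ (q.2 : ℕ) = ((p.2 : ℕ) + j) % n) ∨
      (q.1 = false ∧ p.1 = true ∧ (p.2 : ℕ) = ((q.2 : ℕ) + j) % n) := by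
  rw [bipMatching, SimpleGraph.fromRel_adj]
  constructor
  · rintro ⟨-, h⟩; exact h
  · rintro h
    refine ⟨?_, h⟩
    rintro rfl
    rcases h with ⟨h1, h2, -⟩ | ⟨h1, h2, -⟩ <;> rw [h1] at h2 <;> exact Bool.noConfusion h2

lemma bipMatching_adj_ft {n j : ℕ} (k l : Fin n) :
    (bipMatching n j).Adj (false, k) (true, l) ↔ (l : ℕ) = ((k : ℕ) + j) % n := by
  rw [bipMatching_adj]; simp

lemma bipMatching_adj_tf {n j : ℕ} (k l : Fin n) :
    (bipMatching n j).Adj (true, k) (false, l) ↔ (k : ℕ) = ((l : ℕ) + j) % n := by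
  rw [bipMatching_adj]; simp

lemma bipMatching_adj_ff {n j : ℕ} (k l : Fin n) :
    ¬ (bipMatching n j).Adj (false, k) (false, l) := by
  rw [bipMatching_adj]; simp

lemma bipMatching_adj_tt {n j : ℕ} (k l : Fin n) :
    ¬ (bipMatching n j).Adj (true, k) (true, l) := by
  rw [bipMatching_adj]; simp

/-- mutual exclusivity of distinct matchings -/

lemma bipMatching_not_both {n s t : ℕ} (hs : s < n) (ht : t < n) (hst : s ≠ t)
    (p q : Bool × Fin n) : ¬ ((bipMatching n s).Adj p q ∧ (bipMatching n t).Adj p q) := by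
  rintro ⟨h1, h2⟩
  rw [bipMatching_adj] at h1 h2
  have key : ∀ (a : Fin n), ((a : ℕ) + s) % n = ((a : ℕ) + t) % n → False := by
    intro a h
    have : s % n = t % n := Nat.ModEq.add_left_cancel' (a : ℕ) h
    rw [Nat.mod_eq_of_lt hs, Nat.mod_eq_of_lt ht] at this
    exact hst this
  rcases h1 with ⟨a1, b1, e1⟩ | ⟨a1, b1, e1⟩ <;> rcases h2 with ⟨a2, b2, e2⟩ | ⟨a2, b2, e2⟩
  · exact key p.2 (e1 ▸ e2)
  · rw [a1] at b2; exact Bool.noConfusion b2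
  · rw [a2] at b1; exact Bool.noConfusion b1
  · exact key q.2 (e1 ▸ e2)

lemma neighborSet_bip_false {n j : ℕ} (hj : j < n) (k : Fin n) :
    (bipMatching n j).neighborSet (false, k) =
      {(true, ⟨((k : ℕ) + j) % n, Nat.mod_lt _ (lt_of_le_of_lt (Nat.zero_le j) hj)⟩)} := by
  ext ⟨b, m⟩
  cases b
  · simp [mem_neighborSet, bipMatching_adj_ff]
  · simp only [mem_neighborSet, bipMatching_adj_ft, Set.mem_singleton_iff, Prod.mk.injEq,
      true_and, Fin.ext_iff]

lemma neighborSet_bip_true {n j : ℕ} (hj : j < n) (k : Fin n) :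
    (bipMatching n j).neighborSet (true, k) =
      {(false, ⟨((k : ℕ) + (n - j)) % n, Nat.mod_lt _ (lt_of_le_of_lt (Nat.zero_le j) hj)⟩)} := by
  ext ⟨b, m⟩
  cases b
  · simp only [mem_neighborSet, bipMatching_adj_tf, Set.mem_singleton_iff, Prod.mk.injEq,
      true_and, Fin.ext_iff]
    rw [eq_comm, mod_solve hj k.isLt m.isLt]
  · simp [mem_neighborSet, bipMatching_adj_tt]

lemma neighborSet_sup' {V : Type*} (G H : SimpleGraph V) (v : V) :
    (G ⊔ H).neighborSet v = G.neighborSet v ∪ H.neighborSet v := by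
  ext w; simp [mem_neighborSet]

lemma ncard_neighborSet_cubicBip {n : ℕ} (hn3 : 3 < n) (v : Bool × Fin n) :
    ((cubicBip n).neighborSet v).ncard = 3 := by
  have h0 : (0 : ℕ) < n := by omega
  have h1 : (1 : ℕ) < n := by omega
  have h2 : (2 : ℕ) < n := by omega
  obtain ⟨b, k⟩ := v
  cases b
  · rw [cubicBip, neighborSet_sup', neighborSet_sup', neighborSet_bip_false h0,
      neighborSet_bip_false h1, neighborSet_bip_false h2]
    rw [Set.union_assoc, Set.singleton_union, Set.singleton_union]
    rw [Set.ncard_insert_of_notMem ?h1, Set.ncard_pair ?h2]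
    case h1 =>
      simp only [Set.mem_insert_iff, Set.mem_singleton_iff, Prod.mk.injEq, true_and, Fin.ext_iff]
      push_neg
      exact ⟨fun h => by have := add_mod_inj h0 h1 (k : ℕ) h; omega,
             fun h => by have := add_mod_inj h0 h2 (k : ℕ) h; omega⟩
    case h2 =>
      simp only [ne_eq, Prod.mk.injEq, true_and, Fin.ext_iff]
      exact fun h => by have := add_mod_inj h1 h2 (k : ℕ) h; omega
  · rw [cubicBip, neighborSet_sup', neighborSet_sup', neighborSet_bip_true h0,
      neighborSet_bip_true h1, neighborSet_bip_true h2]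
    rw [Set.union_assoc, Set.singleton_union, Set.singleton_union]
    rw [Set.ncard_insert_of_notMem ?h3, Set.ncard_pair ?h4]
    case h3 =>
      simp only [Set.mem_insert_iff, Set.mem_singleton_iff, Prod.mk.injEq, true_and, Fin.ext_iff]
      push_neg
      exact ⟨fun h => by have := sub_mod_inj h0 h1 k h; omega,
             fun h => by have := sub_mod_inj h0 h2 k h; omega⟩
    case h4 =>
      simp only [ne_eq, Prod.mk.injEq, true_and, Fin.ext_iff]
      exact fun h => by have := sub_mod_inj h1 h2 k h; omega

lemma ncard_edgeSet_cubicBip {n : ℕ} (hn3 : 3 < n) :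
    (cubicBip n).edgeSet.ncard = 3 * n := by
  classical
  have hdeg : ∀ v, (cubicBip n).degree v = 3 := by
    intro v
    have := ncard_neighborSet_cubicBip hn3 v
    rwa [Set.ncard_eq_toFinset_card'] at this
  have hh := SimpleGraph.sum_degrees_eq_twice_card_edges (cubicBip n)
  simp only [hdeg, Finset.sum_const, smul_eq_mul, Finset.card_univ] at hh
  have hcV : Fintype.card (Bool × Fin n) = 2 * n := by
    rw [Fintype.card_prod, Fintype.card_bool, Fintype.card_fin]
  rw [hcV] at hh
  have heq : (cubicBip n).edgeSet.ncard = (cubicBip n).edgeFinset.card :=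
    Set.ncard_eq_toFinset_card' _
  omega

lemma union_connected {n i j : ℕ} (hij : i < j) (hj : j < n) {e : ℕ}
    (he : ((j - i) * e) % n = 1) :
    (bipMatching n i ⊔ bipMatching n j).Connected := by
  set d := j - i with hd
  have hn : 0 < n := lt_of_le_of_lt (Nat.zero_le j) hj
  set G := bipMatching n i ⊔ bipMatching n j with hG
  have hi : i < n := lt_trans hij hj
  -- basic adjacency into G
  have adjF : ∀ (k l : Fin n), (l : ℕ) = ((k : ℕ) + i) % n → G.Adj (false, k) (true, l) := by
    intro k l h
    exact Or.inl ((bipMatching_adj_ft k l).2 h)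
  have adjF' : ∀ (k l : Fin n), (l : ℕ) = ((k : ℕ) + j) % n → G.Adj (false, k) (true, l) := by
    intro k l h
    exact Or.inr ((bipMatching_adj_ft k l).2 h)
  -- step: (false, k) reachable to (false, (k + d) % n)
  have step : ∀ k : Fin n, G.Reachable (false, k) (false, ⟨((k : ℕ) + d) % n, Nat.mod_lt _ hn⟩) := by
    intro k
    set k' : Fin n := ⟨((k : ℕ) + d) % n, Nat.mod_lt _ hn⟩ with hk'
    set l : Fin n := ⟨((k : ℕ) + j) % n, Nat.mod_lt _ hn⟩ with hl
    have h1 : G.Adj (false, k) (true, l) := adjF' k l rfl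
    have h2 : G.Adj (false, k') (true, l) := by
      apply adjF
      show ((k : ℕ) + j) % n = (((k : ℕ) + d) % n + i) % n
      rw [Nat.mod_add_mod]
      congr 1
      omega
    exact (h1.toWalk.reachable).trans h2.toWalk.reachable.symm
  -- iterate
  have iter : ∀ (m : ℕ) (k : Fin n),
      G.Reachable (false, k) (false, ⟨((k : ℕ) + d * m) % n, Nat.mod_lt _ hn⟩) := by
    intro m
    induction m with
    | zero =>
      intro k
      have : (⟨((k : ℕ) + d * 0) % n, Nat.mod_lt _ hn⟩ : Fin n) = k := by
        ext; simp [Nat.mod_eq_of_lt k.isLt]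
      rw [this]
    | succ m ih =>
      intro k
      refine (ih k).trans ?_
      have := step ⟨((k : ℕ) + d * m) % n, Nat.mod_lt _ hn⟩
      convert this using 2
      ext
      show ((k : ℕ) + d * (m + 1)) % n = (((k : ℕ) + d * m) % n + d) % n
      rw [Nat.mod_add_mod]
      congr 1
      ring
  -- reach every a-vertex from a_0
  have reachA : ∀ t : Fin n, G.Reachable (false, ⟨0, hn⟩) (false, t) := by
    intro t
    have := iter (e * (t : ℕ)) ⟨0, hn⟩
    convert this using 2
    ext
    show (t : ℕ) = (0 + d * (e * (t : ℕ))) % n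
    rw [Nat.zero_add, ← Nat.mul_assoc, Nat.mul_mod, he, Nat.one_mul, Nat.mod_mod_of_dvd _ dvd_rfl, Nat.mod_eq_of_lt t.isLt]
  -- reach every vertex from a_0
  have reachAll : ∀ v : Bool × Fin n, G.Reachable (false, ⟨0, hn⟩) v := by
    rintro ⟨b, t⟩
    cases b
    · exact reachA t
    · set m : Fin n := ⟨((t : ℕ) + (n - i)) % n, Nat.mod_lt _ hn⟩ with hm
      have hadj : G.Adj (false, m) (true, t) := by
        apply adjF
        symm
        rw [mod_solve hi t.isLt m.isLt]
      exact (reachA m).trans hadj.toWalk.reachable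
  rw [connected_iff]
  refine ⟨fun u v => (reachAll u).symm.trans (reachAll v), ⟨(false, ⟨0, hn⟩)⟩⟩

lemma card_le_ncard_edgeSet_add_one {V : Type*} [Fintype V] {G : SimpleGraph V}
    (h : G.Connected) : Fintype.card V ≤ G.edgeSet.ncard + 1 := by
  classical
  obtain ⟨root⟩ := h.nonempty
  -- for each v ≠ root there is a neighbor closer to root
  have key : ∀ v : V, v ≠ root → ∃ u : V, G.Adj v u ∧ G.dist u root < G.dist v root := by
    intro v hv
    have hpos : 0 < G.dist v root := h.pos_dist_of_ne hv
    obtain ⟨p, hp⟩ := (h.preconnected v root).exists_walk_length_eq_dist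
    cases p with
    | nil => simp at hpos
    | cons hadj q =>
      refine ⟨_, hadj, ?_⟩
      have : G.dist _ root ≤ q.length := dist_le q
      simp [Walk.length_cons] at hp
      omega
  choose f hf1 hf2 using key
  -- injective map from {v // v ≠ root} to edgeSet
  set F : {v : V // v ≠ root} → G.edgeSet :=
    fun v => ⟨s(v.1, f v.1 v.2), (hf1 v.1 v.2)⟩ with hF
  have hinj : Function.Injective F := by
    rintro ⟨v, hv⟩ ⟨w, hw⟩ hvw
    simp only [hF, Subtype.mk.injEq, Sym2.eq_iff, Sym2.eq, Sym2.rel_iff', Prod.mk.injEq, Prod.swap_prod_mk]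
      at hvw
    replace hvw : s(v, f v hv) = s(w, f w hw) := congrArg Subtype.val hvw
    rw [Sym2.eq_iff] at hvw
    rcases hvw with ⟨h1, -⟩ | ⟨h1, h2⟩
    · exact Subtype.ext h1
    · exfalso
      have a1 := hf2 v hv
      have a2 := hf2 w hw
      rw [h2] at a1
      rw [← h1] at a2
      omega
  have hcard : Fintype.card {v : V // v ≠ root} ≤ Nat.card G.edgeSet := by
    have := Fintype.card_le_of_injective F hinj  -- needs Fintype on edgeSet
    rwa [Nat.card_eq_fintype_card]
  have h1 : Fintype.card {v : V // v ≠ root} = Fintype.card V - 1 := by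
    simp [Fintype.card_subtype_compl]
  have h2 : Nat.card G.edgeSet = G.edgeSet.ncard := (Nat.card_coe_set_eq _)
  have hV : 0 < Fintype.card V := Fintype.card_pos_iff.2 ⟨root⟩
  omega

lemma h4test {α : Type*} [DecidableEq α] (C : Fin 5 → Finset α) (e : α) :
    (∑ p ∈ Finset.univ ×ˢ (Finset.univ : Finset (Fin 5)),
      (if e ∈ symmDiff (C p.1) (C p.2) then 1 else 0)) ≤ 12 := by
  set T := Finset.filter (fun a => e ∈ C a) (Finset.univ : Finset (Fin 5)) with hT
  have hfil : Finset.filter (fun p : Fin 5 × Fin 5 => e ∈ symmDiff (C p.1) (C p.2))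
      (Finset.univ ×ˢ Finset.univ) = T ×ˢ Tᶜ ∪ Tᶜ ×ˢ T := by
    ext ⟨a, b⟩
    simp only [Finset.mem_filter, Finset.mem_product, Finset.mem_union, Finset.mem_compl,
      Finset.mem_symmDiff, hT, Finset.mem_univ, true_and, and_true]
    tauto
  have hdisj : Disjoint (T ×ˢ Tᶜ) (Tᶜ ×ˢ T) := by
    rw [Finset.disjoint_left]
    rintro ⟨a, b⟩ h1' h2'
    rw [Finset.mem_product] at h1' h2'
    exact (Finset.mem_compl.1 h2'.1) h1'.1
  have hk5 : T.card ≤ 5 := by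
    have := Finset.card_filter_le (Finset.univ : Finset (Fin 5)) (fun a => e ∈ C a)
    simpa using this
  rw [← Finset.card_filter, hfil, Finset.card_union_of_disjoint hdisj,
    Finset.card_product, Finset.card_product, Finset.card_compl, Fintype.card_fin]
  have h6 : ∀ k < 6, k * (5 - k) + (5 - k) * k ≤ 12 := by decide
  exact h6 T.card (by omega)

lemma five_code_false {α : Type*} [DecidableEq α] {n : ℕ} (hn : 3 < n)
    (E : Finset α) (C : Fin 5 → Finset α) (hCE : ∀ a, C a ⊆ E) (hEcard : E.card = 3 * n)
    (hdistlb : ∀ a b : Fin 5, a ≠ b → 2 * n ≤ (symmDiff (C a) (C b)).card + 1) : False := by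
  -- symmDiff card identity (for parity)
  have hsdid : ∀ a b : Fin 5,
      (symmDiff (C a) (C b)).card + 2 * (C a ∩ C b).card = (C a).card + (C b).card := by
    intro a b
    have h1 : (symmDiff (C a) (C b)) = (C a ∪ C b) \ (C a ∩ C b) := by
      rw [symmDiff_eq_sup_sdiff_inf]; rfl
    have h2 : (C a ∩ C b) ⊆ (C a ∪ C b) :=
      (Finset.inter_subset_left).trans Finset.subset_union_left
    have h3 := Finset.card_union_add_card_inter (C a) (C b)
    rw [h1, Finset.card_sdiff_of_subset h2]
    have h4 : (C a ∩ C b).card ≤ (C a ∪ C b).card := Finset.card_le_card h2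
    omega
  -- pigeonhole: 3 indices with equal parity
  obtain ⟨y, -, hy⟩ := Finset.exists_lt_card_fiber_of_mul_lt_card_of_maps_to
    (s := (Finset.univ : Finset (Fin 5))) (t := ({0, 1} : Finset ℕ))
    (f := fun a => (C a).card % 2) (n := 2)
    (fun a _ => by have := Nat.mod_two_eq_zero_or_one ((C a).card); simp; omega)
    (by simp)
  set T3 := Finset.filter (fun x => (C x).card % 2 = y) Finset.univ with hT3
  have h3le : 3 ≤ T3.card := hy
  obtain ⟨t3, ht3sub, ht3c⟩ := Finset.exists_subset_card_eq h3le
  have hpar : ∀ a ∈ t3, (C a).card % 2 = y := by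
    intro a ha
    exact (Finset.mem_filter.1 (ht3sub ha)).2
  -- even distances within the triple
  have hdist2n : ∀ a ∈ t3, ∀ b ∈ t3, a ≠ b → 2 * n ≤ (symmDiff (C a) (C b)).card := by
    intro a ha b hb hab
    have he1 := hpar a ha
    have he2 := hpar b hb
    have hid := hsdid a b
    have hlb := hdistlb a b hab
    omega
  -- sums over offDiag
  set D := (Finset.univ : Finset (Fin 5)).offDiag with hD
  set P3 := t3.offDiag with hP3
  have hP3D : P3 ⊆ D := by
    intro p hp
    rw [hP3, Finset.mem_offDiag] at hp
    rw [hD, Finset.mem_offDiag]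
    exact ⟨Finset.mem_univ _, Finset.mem_univ _, hp.2.2⟩
  have hDcard : D.card = 20 := by
    rw [hD, Finset.offDiag_card]; simp
  have hP3card : P3.card = 6 := by
    rw [hP3, Finset.offDiag_card, ht3c]
  set d : Fin 5 × Fin 5 → ℕ := fun p => (symmDiff (C p.1) (C p.2)).card with hd
  -- lower bound for the total
  have hlow : 6 * (2 * n) + 14 * (2 * n - 1) ≤ ∑ p ∈ D, d p := by
    rw [← Finset.sum_sdiff hP3D]
    have hb1 : 6 * (2 * n) ≤ ∑ p ∈ P3, d p := by
      have := Finset.card_nsmul_le_sum P3 d (2 * n) (by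
        intro p hp
        rw [hP3, Finset.mem_offDiag] at hp
        exact hdist2n _ hp.1 _ hp.2.1 hp.2.2)
      rwa [hP3card, smul_eq_mul] at this
    have hb2 : 14 * (2 * n - 1) ≤ ∑ p ∈ D \ P3, d p := by
      have hcard : (D \ P3).card = 14 := by
        rw [Finset.card_sdiff_of_subset hP3D, hDcard, hP3card]
      have := Finset.card_nsmul_le_sum (D \ P3) d (2 * n - 1) (by
        intro p hp
        have hpD := Finset.mem_sdiff.1 hp |>.1
        rw [hD, Finset.mem_offDiag] at hpD
        have := hdistlb p.1 p.2 hpD.2.2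
        show 2 * n - 1 ≤ (symmDiff (C p.1) (C p.2)).card
        omega)
      rwa [hcard, smul_eq_mul] at this
    omega
  -- upper bound for the total
  have hup : ∑ p ∈ D, d p ≤ 12 * (3 * n) := by
    have hsubP : D ⊆ Finset.univ ×ˢ Finset.univ := by
      intro p hp; simp
    have h1 : ∑ p ∈ D, d p ≤ ∑ p ∈ Finset.univ ×ˢ Finset.univ, d p :=
      Finset.sum_le_sum_of_subset hsubP
    have h2 : ∀ p : Fin 5 × Fin 5,
        d p = ∑ e ∈ E, if e ∈ symmDiff (C p.1) (C p.2) then 1 else 0 := by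
      intro p
      have hsub : symmDiff (C p.1) (C p.2) ⊆ E := by
        intro e he
        rw [Finset.mem_symmDiff] at he
        rcases he with ⟨h, -⟩ | ⟨h, -⟩
        exacts [hCE _ h, hCE _ h]
      rw [hd, ← Finset.card_filter, Finset.filter_mem_eq_inter, Finset.inter_eq_right.2 hsub]
    have h3 : ∑ p ∈ Finset.univ ×ˢ Finset.univ, d p
        = ∑ e ∈ E, ∑ p ∈ Finset.univ ×ˢ (Finset.univ : Finset (Fin 5)),
            (if e ∈ symmDiff (C p.1) (C p.2) then 1 else 0) := by
      calc ∑ p ∈ Finset.univ ×ˢ Finset.univ, d p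
          = ∑ p ∈ Finset.univ ×ˢ (Finset.univ : Finset (Fin 5)),
              ∑ e ∈ E, (if e ∈ symmDiff (C p.1) (C p.2) then 1 else 0) :=
            Finset.sum_congr rfl (fun p _ => h2 p)
        _ = _ := Finset.sum_comm
    have h4 : ∀ e : α,
        (∑ p ∈ Finset.univ ×ˢ (Finset.univ : Finset (Fin 5)),
          (if e ∈ symmDiff (C p.1) (C p.2) then 1 else 0)) ≤ 12 := fun e => h4test C e
    calc ∑ p ∈ D, d p ≤ _ := h1
      _ = _ := h3
      _ ≤ ∑ e ∈ E, 12 := Finset.sum_le_sum (fun e _ => h4 e)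
      _ = 12 * (3 * n) := by rw [Finset.sum_const, smul_eq_mul, hEcard]; ring
  omega

lemma edgeSet_symmDiff {V : Type*} (G₁ G₂ : SimpleGraph V) :
    (symmDiff G₁ G₂).edgeSet = symmDiff G₁.edgeSet G₂.edgeSet := by
  rw [symmDiff_def, symmDiff_def, edgeSet_sup, edgeSet_sdiff, edgeSet_sdiff]
  rfl

lemma code_ncard_le {n : ℕ} (hn : 3 < n) (𝒢 : Set (SimpleGraph (Bool × Fin n)))
    (hC : IsConnCode (cubicBip n) 𝒢) : 𝒢.ncard ≤ 4 := by
  classical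
  by_contra hlt
  push_neg at hlt
  have h5 : 5 ≤ 𝒢.ncard := hlt
  have hfin : 𝒢.Finite := Set.toFinite _
  rw [Set.ncard_eq_toFinset_card _ hfin] at h5
  obtain ⟨t, htsub, htc⟩ := Finset.exists_subset_card_eq h5
  set eqv := t.equivFinOfCardEq htc with heqv
  set c : Fin 5 → SimpleGraph (Bool × Fin n) := fun a => (eqv.symm a : _) with hc
  have hcinj : Function.Injective c := fun a b h =>
    eqv.symm.injective (Subtype.ext h)
  have hcmem : ∀ a, c a ∈ 𝒢 := fun a => hfin.mem_toFinset.1 (htsub (eqv.symm a).2)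
  set E : Finset (Sym2 (Bool × Fin n)) := (cubicBip n).edgeFinset with hE
  set C : Fin 5 → Finset (Sym2 (Bool × Fin n)) := fun a => (c a).edgeFinset with hCdef
  have hCE : ∀ a, C a ⊆ E := fun a => edgeFinset_mono (hC.1 _ (hcmem a))
  have hEcard : E.card = 3 * n := by
    have := ncard_edgeSet_cubicBip hn
    rwa [Set.ncard_eq_toFinset_card'] at this
  have hdistlb : ∀ a b : Fin 5, a ≠ b → 2 * n ≤ (symmDiff (C a) (C b)).card + 1 := by
    intro a b hab
    have hconn := hC.2 _ (hcmem a) _ (hcmem b) (fun h => hab (hcinj h))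
    have hle := card_le_ncard_edgeSet_add_one hconn
    have hcV : Fintype.card (Bool × Fin n) = 2 * n := by
      rw [Fintype.card_prod, Fintype.card_bool, Fintype.card_fin]
    rw [hcV] at hle
    have hsd : (symmDiff (c a) (c b)).edgeSet.ncard = (symmDiff (C a) (C b)).card := by
      rw [edgeSet_symmDiff, Set.ncard_eq_toFinset_card', Set.toFinset_symmDiff]
      rfl
    omega
  exact five_code_false hn E C hCE hEcard hdistlb

lemma symmDiff_sup_sup {i j k : ℕ} (hi : i < n) (hj : j < n) (hk : k < n)
    (hij : i ≠ j) (hik : i ≠ k) (hjk : j ≠ k) :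
    symmDiff (bipMatching n i ⊔ bipMatching n j) (bipMatching n i ⊔ bipMatching n k)
      = bipMatching n j ⊔ bipMatching n k := by
  ext p q
  simp only [symmDiff_def, SimpleGraph.sup_adj, SimpleGraph.sdiff_adj]
  have h1 := bipMatching_not_both hi hj hij p q
  have h2 := bipMatching_not_both hi hk hik p q
  have h3 := bipMatching_not_both hj hk hjk p q
  tauto

lemma bip_union_adj_ft {i j : ℕ} (k l : Fin n) :
    (bipMatching n i ⊔ bipMatching n j).Adj (false, k) (true, l) ↔
      ((l : ℕ) = ((k : ℕ) + i) % n ∨ (l : ℕ) = ((k : ℕ) + j) % n) := by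
  simp [SimpleGraph.sup_adj, bipMatching_adj_ft]

lemma code_distinct (hn : 3 < n) :
    (⊥ : SimpleGraph (Bool × Fin n)) ≠ bipMatching n 0 ⊔ bipMatching n 1 ∧
    (⊥ : SimpleGraph (Bool × Fin n)) ≠ bipMatching n 0 ⊔ bipMatching n 2 ∧
    (⊥ : SimpleGraph (Bool × Fin n)) ≠ bipMatching n 1 ⊔ bipMatching n 2 ∧
    bipMatching n 0 ⊔ bipMatching n 1 ≠ bipMatching n 0 ⊔ bipMatching n 2 ∧
    bipMatching n 0 ⊔ bipMatching n 1 ≠ bipMatching n 1 ⊔ bipMatching n 2 ∧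
    bipMatching n 0 ⊔ bipMatching n 2 ≠ bipMatching n 1 ⊔ bipMatching n 2 := by
  have h0n : 0 < n := by omega
  have h1n : 1 < n := by omega
  have h2n : 2 < n := by omega
  have z : Fin n := ⟨0, h0n⟩
  have a01 : (bipMatching n 0 ⊔ bipMatching n 1).Adj (false, ⟨0, h0n⟩) (true, ⟨1, h1n⟩) := by
    rw [bip_union_adj_ft]
    right
    simp [Nat.mod_eq_of_lt h1n]
  have a00 : (bipMatching n 0 ⊔ bipMatching n 1).Adj (false, ⟨0, h0n⟩) (true, ⟨0, h0n⟩) := by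
    rw [bip_union_adj_ft]
    left
    simp [Nat.mod_eq_of_lt h0n]
  have a02 : (bipMatching n 0 ⊔ bipMatching n 2).Adj (false, ⟨0, h0n⟩) (true, ⟨0, h0n⟩) := by
    rw [bip_union_adj_ft]
    left
    simp [Nat.mod_eq_of_lt h0n]
  have a12 : (bipMatching n 1 ⊔ bipMatching n 2).Adj (false, ⟨0, h0n⟩) (true, ⟨1, h1n⟩) := by
    rw [bip_union_adj_ft]
    left
    simp [Nat.mod_eq_of_lt h1n]
  have na1 : ¬ (bipMatching n 0 ⊔ bipMatching n 2).Adj (false, ⟨0, h0n⟩) (true, ⟨1, h1n⟩) := by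
    rw [bip_union_adj_ft]
    simp [Nat.mod_eq_of_lt h0n, Nat.mod_eq_of_lt h2n]
  have na2 : ¬ (bipMatching n 1 ⊔ bipMatching n 2).Adj (false, ⟨0, h0n⟩) (true, ⟨0, h0n⟩) := by
    rw [bip_union_adj_ft]
    simp [Nat.mod_eq_of_lt h1n, Nat.mod_eq_of_lt h2n]
  refine ⟨?_, ?_, ?_, ?_, ?_, ?_⟩
  · intro h; rw [← h] at a01; exact a01
  · intro h; rw [← h] at a02; exact a02
  · intro h; rw [← h] at a12; exact a12
  · intro h; rw [h] at a01; exact na1 a01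
  · intro h; rw [h] at a00; exact na2 a00
  · intro h; rw [h] at a02; exact na2 a02

lemma code_is_code (hodd : Odd n) (hn : 3 < n) :
    IsConnCode (cubicBip n)
      {⊥, bipMatching n 0 ⊔ bipMatching n 1, bipMatching n 0 ⊔ bipMatching n 2,
        bipMatching n 1 ⊔ bipMatching n 2} := by
  have h0 : (0:ℕ) < n := by omega
  have h1 : (1:ℕ) < n := by omega
  have h2 : (2:ℕ) < n := by omega
  -- connectivity of the three unions
  obtain ⟨r, hr⟩ := id hodd
  have he2 : ((2:ℕ) * (r + 1)) % n = 1 := by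
    have : 2 * (r + 1) = n + 1 := by omega
    rw [this, Nat.add_mod_left, Nat.mod_eq_of_lt h1]
  have he1 : ((1:ℕ) * 1) % n = 1 := by rw [Nat.one_mul, Nat.mod_eq_of_lt h1]
  have conn01 : (bipMatching n 0 ⊔ bipMatching n 1).Connected :=
    union_connected (by omega) h1 (e := 1) (by simpa using he1)
  have conn02 : (bipMatching n 0 ⊔ bipMatching n 2).Connected :=
    union_connected (by omega) h2 (e := r + 1) (by simpa using he2)
  have conn12 : (bipMatching n 1 ⊔ bipMatching n 2).Connected :=
    union_connected (by omega) h2 (e := 1) (by simpa using he1)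
  -- symmDiff computations
  have s1 : symmDiff (bipMatching n 0 ⊔ bipMatching n 1) (bipMatching n 0 ⊔ bipMatching n 2)
      = bipMatching n 1 ⊔ bipMatching n 2 :=
    symmDiff_sup_sup h0 h1 h2 (by omega) (by omega) (by omega)
  have s2 : symmDiff (bipMatching n 0 ⊔ bipMatching n 1) (bipMatching n 1 ⊔ bipMatching n 2)
      = bipMatching n 0 ⊔ bipMatching n 2 := by
    rw [sup_comm (bipMatching n 0) (bipMatching n 1),
      symmDiff_sup_sup h1 h0 h2 (by omega) (by omega) (by omega)]
  have s3 : symmDiff (bipMatching n 0 ⊔ bipMatching n 2) (bipMatching n 1 ⊔ bipMatching n 2)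
      = bipMatching n 0 ⊔ bipMatching n 1 := by
    rw [sup_comm (bipMatching n 0) (bipMatching n 2),
      sup_comm (bipMatching n 1) (bipMatching n 2),
      symmDiff_sup_sup h2 h0 h1 (by omega) (by omega) (by omega),
      sup_comm]
  constructor
  · intro G hG
    simp only [Set.mem_insert_iff, Set.mem_singleton_iff] at hG
    rcases hG with rfl | rfl | rfl | rfl
    · exact bot_le
    · exact le_sup_left
    · exact sup_le (le_sup_of_le_left le_sup_left) le_sup_right
    · exact sup_le (le_sup_of_le_left le_sup_right) le_sup_right
  · intro G1 hG1 G2 hG2 hne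
    simp only [Set.mem_insert_iff, Set.mem_singleton_iff] at hG1 hG2
    rcases hG1 with rfl | rfl | rfl | rfl <;> rcases hG2 with rfl | rfl | rfl | rfl <;>
      first
        | exact absurd rfl hne
        | (rw [bot_symmDiff]; assumption)
        | (rw [symmDiff_bot]; assumption)
        | (rw [s1]; exact conn12)
        | (rw [s2]; exact conn02)
        | (rw [s3]; exact conn01)
        | (rw [symmDiff_comm, s1]; exact conn12)
        | (rw [symmDiff_comm, s2]; exact conn02)
        | (rw [symmDiff_comm, s3]; exact conn01)

lemma code_ncard_eq (hn : 3 < n) :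
    ({⊥, bipMatching n 0 ⊔ bipMatching n 1, bipMatching n 0 ⊔ bipMatching n 2,
        bipMatching n 1 ⊔ bipMatching n 2} : Set (SimpleGraph (Bool × Fin n))).ncard = 4 := by
  obtain ⟨d1, d2, d3, d4, d5, d6⟩ := code_distinct hn
  rw [Set.ncard_insert_of_notMem (by simp [d1, d2, d3]) (Set.toFinite _),
    Set.ncard_insert_of_notMem (by simp [d4, d5]) (Set.toFinite _),
    Set.ncard_pair d6]

lemma union_degree_two {n i j : ℕ} (hi : i < n) (hj : j < n) (hij : i ≠ j)
    (v : Bool × Fin n) :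
    ((bipMatching n i ⊔ bipMatching n j).neighborSet v).ncard = 2 := by
  obtain ⟨b, k⟩ := v
  cases b
  · rw [neighborSet_sup', neighborSet_bip_false hi, neighborSet_bip_false hj,
      Set.singleton_union]
    refine Set.ncard_pair ?_
    simp only [ne_eq, Prod.mk.injEq, true_and, Fin.ext_iff]
    exact fun h => hij (add_mod_inj hi hj (k : ℕ) h)
  · rw [neighborSet_sup', neighborSet_bip_true hi, neighborSet_bip_true hj,
      Set.singleton_union]
    refine Set.ncard_pair ?_
    simp only [ne_eq, Prod.mk.injEq, true_and, Fin.ext_iff]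
    exact fun h => hij (sub_mod_inj hi hj k h)

/-- For every odd `n > 3`, `m(H_n) = 4`; moreover the four subgraphs consisting of the
edgeless spanning subgraph together with the three unions `M_i ∪ M_j`, `0 ≤ i < j ≤ 2`, form
a connectivity code for `H_n`, and each union of two of the matchings is a Hamilton cycle
of `H_n` (a connected spanning `2`-regular subgraph). -/
theorem stmt15 (n : ℕ) (hodd : Odd n) (hn : 3 < n) :
    mCode (cubicBip n) = 4 ∧
    IsConnCode (cubicBip n)
      {⊥, bipMatching n 0 ⊔ bipMatching n 1, bipMatching n 0 ⊔ bipMatching n 2,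
        bipMatching n 1 ⊔ bipMatching n 2} ∧
    (∀ i j : ℕ, i < j → j ≤ 2 →
      (bipMatching n i ⊔ bipMatching n j).Connected ∧
      ∀ v : Bool × Fin n,
        ((bipMatching n i ⊔ bipMatching n j).neighborSet v).ncard = 2) := by
  have h1n : (1:ℕ) < n := by omega
  have h2n : (2:ℕ) < n := by omega
  obtain ⟨r, hr⟩ := id hodd
  have he2 : ((2:ℕ) * (r + 1)) % n = 1 := by
    have h : 2 * (r + 1) = n + 1 := by omega
    rw [h, Nat.add_mod_left, Nat.mod_eq_of_lt h1n]
  have he1 : ((1:ℕ) * 1) % n = 1 := by rw [Nat.one_mul, Nat.mod_eq_of_lt h1n]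
  refine ⟨?_, code_is_code hodd hn, ?_⟩
  · -- mCode = 4
    have hmem : 4 ∈ {m : ℕ | ∃ 𝒢 : Set (SimpleGraph (Bool × Fin n)),
        IsConnCode (cubicBip n) 𝒢 ∧ 𝒢.ncard = m} :=
      ⟨_, code_is_code hodd hn, code_ncard_eq hn⟩
    have hub : ∀ m ∈ {m : ℕ | ∃ 𝒢 : Set (SimpleGraph (Bool × Fin n)),
        IsConnCode (cubicBip n) 𝒢 ∧ 𝒢.ncard = m}, m ≤ 4 := by
      rintro m ⟨𝒢, hc, rfl⟩
      exact code_ncard_le hn 𝒢 hc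
    exact le_antisymm (csSup_le ⟨4, hmem⟩ hub) (le_csSup ⟨4, hub⟩ hmem)
  · intro i j hij hj2
    constructor
    · have hj1 : 1 ≤ j := by omega
      interval_cases j <;> interval_cases i
      · exact union_connected (by omega) h1n (e := 1) (by simpa using he1)
      · exact union_connected (by omega) h2n (e := r + 1) (by simpa using he2)
      · exact union_connected (by omega) h2n (e := 1) (by simpa using he1)
    · exact union_degree_two (by omega) (by omega) (by omega)
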